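/- Let {x ↦ c_i x + τ_i}_{i∈𝒜} be a self-similar IFS on ℝ with max_i |c_i| < 1/2, and let Π(ī) ∈ ℝ^𝒜 be the vector with j-th coordinate Σ_{k=1}^∞ δ_{i_k}^j c_{i₁}⋯c_{i_{k−1}}. Then for ī ≠ j̄ ∈ Σ, ‖Π(ī) − Π(j̄)‖ ≥ |c_{ī∧j̄}| · (1 − 2max_i|c_i|)/(1 − max_i|c_i|) > 0, where ī∧j̄ is the longest common prefix and c_{w} = c_{w₁}⋯c_{w_n} for a finite word w. -/

import Mathlib

open Finset
open scoped ENNReal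

noncomputable section

lemma coord_le_norm {ι : Type} [Fintype ι] (x : EuclideanSpace ℝ ι) (j : ι) :
    |x j| ≤ ‖x‖ := by
  rw [EuclideanSpace.norm_eq]
  calc |x j| = Real.sqrt (‖x j‖ ^ 2) := by
        rw [Real.norm_eq_abs, Real.sqrt_sq_eq_abs, abs_abs]
    _ ≤ _ := Real.sqrt_le_sqrt (Finset.single_le_sum
        (fun i _ => sq_nonneg ‖x i‖) (mem_univ j))

/-- term of the series defining `PiVec`. -/
def pterm {ι : Type} [DecidableEq ι] (c : ι → ℝ) (b : ℕ → ι) (j : ι) (k : ℕ) : ℝ :=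
  (if b k = j then (1 : ℝ) else 0) * ∏ l ∈ Finset.range k, c (b l)

lemma abs_pterm_le {ι : Type} [DecidableEq ι] (c : ι → ℝ) (b : ℕ → ι) (j : ι) (k : ℕ) :
    |pterm c b j k| ≤ |∏ l ∈ Finset.range k, c (b l)| := by
  unfold pterm; split_ifs <;> simp

lemma summable_pterm {ι : Type} [DecidableEq ι] (c : ι → ℝ) {M : ℝ} (hM1 : M < 1)
    (hMle : ∀ i, |c i| ≤ M) (hM0 : 0 ≤ M) (b : ℕ → ι) (j : ι) :
    Summable (pterm c b j) := by
  apply Summable.of_norm_bounded (summable_geometric_of_lt_one hM0 hM1)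
  intro k
  rw [Real.norm_eq_abs]
  refine (abs_pterm_le c b j k).trans ?_
  rw [abs_prod]
  calc ∏ l ∈ Finset.range k, |c (b l)| ≤ ∏ l ∈ Finset.range k, M :=
        Finset.prod_le_prod (fun _ _ => abs_nonneg _) (fun l _ => hMle _)
    _ = M ^ k := by rw [prod_const, card_range]

/-- The coefficient vector `Π(ī) ∈ ℝ^𝒜` with `j`-th coordinate
`∑ₖ δ_{ī(k)}^j c_{ī(0)} ⋯ c_{ī(k−1)}`, so that `π_τ(ī) = ⟨τ, Π(ī)⟩`. -/
noncomputable def PiVec {ι : Type} [Fintype ι] [DecidableEq ι] (c : ι → ℝ)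
    (ib : ℕ → ι) : EuclideanSpace ℝ ι :=
  (WithLp.equiv 2 (ι → ℝ)).symm
    (fun j => ∑' k : ℕ, (if ib k = j then (1 : ℝ) else 0) * ∏ l ∈ Finset.range k, c (ib l))

/-- Transversality: for a self-similar IFS `{x ↦ cᵢ x + τᵢ}` with `maxᵢ |cᵢ| < 1/2`
and distinct infinite words `ī ≠ j̄` whose longest common prefix has length `n`,
`‖Π(ī) − Π(j̄)‖ ≥ |c_{ī∧j̄}| (1 − 2 maxᵢ|cᵢ|)/(1 − maxᵢ|cᵢ|) > 0`. -/
theorem stmt15 {ι : Type} [Fintype ι] [Nonempty ι] [DecidableEq ι]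
    (c : ι → ℝ) (h0 : ∀ i, 0 < |c i|) (hc : ∀ i, |c i| < 1 / 2) :
    ∀ (ib jb : ℕ → ι) (n : ℕ), (∀ k < n, ib k = jb k) → ib n ≠ jb n →
      (|∏ l ∈ Finset.range n, c (ib l)| *
          ((1 - 2 * Finset.univ.sup' Finset.univ_nonempty (fun i => |c i|)) /
            (1 - Finset.univ.sup' Finset.univ_nonempty (fun i => |c i|))) ≤
        ‖PiVec c ib - PiVec c jb‖) ∧
      0 < |∏ l ∈ Finset.range n, c (ib l)| *
          ((1 - 2 * Finset.univ.sup' Finset.univ_nonempty (fun i => |c i|)) /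
            (1 - Finset.univ.sup' Finset.univ_nonempty (fun i => |c i|))) := by
  intro ib jb n hpre hne
  set M := Finset.univ.sup' Finset.univ_nonempty (fun i => |c i|) with hMdef
  have hMle : ∀ i, |c i| ≤ M := fun i => Finset.le_sup' (fun i => |c i|) (mem_univ i)
  have hM0 : 0 < M := lt_of_lt_of_le (h0 (Classical.arbitrary ι)) (hMle _)
  have hM : M < 1/2 := by
    rw [hMdef]; exact (Finset.sup'_lt_iff _).2 fun i _ => hc i
  have hM1 : M < 1 := by linarith
  set P := ∏ l ∈ Finset.range n, c (ib l) with hPdef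
  have hP0 : 0 < |P| := by rw [hPdef, abs_prod]; exact prod_pos fun l _ => h0 _
  have hfrac : 0 < (1 - 2*M)/(1-M) := div_pos (by linarith) (by linarith)
  refine ⟨?_, mul_pos hP0 hfrac⟩
  have hsum : ∀ (b : ℕ → ι) j, Summable (pterm c b j) :=
    summable_pterm c hM1 hMle hM0.le
  set G : ι → ℕ → ℝ := fun j k => pterm c ib j k - pterm c jb j k with hG
  have hGsum : ∀ j, Summable (G j) := fun j => (hsum ib j).sub (hsum jb j)
  have hΔ : ∀ j, (PiVec c ib - PiVec c jb) j = ∑' k, G j k := by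
    intro j
    simp only [PiLp.sub_apply, PiVec, WithLp.equiv_symm_apply, PiLp.toLp_apply, hG]
    exact (Summable.tsum_sub (hsum ib j) (hsum jb j)).symm
  -- common prefix product equality
  have hprodeq : ∀ k ≤ n, ∏ l ∈ Finset.range k, c (jb l) = ∏ l ∈ Finset.range k, c (ib l) :=
    fun k hk => Finset.prod_congr rfl fun l hl =>
      (congrArg c (hpre l (lt_of_lt_of_le (mem_range.mp hl) hk))).symm
  have hheadzero : ∀ j, ∀ k < n, G j k = 0 := by
    intro j k hk
    simp only [hG, pterm, hpre k hk, hprodeq k hk.le, sub_self]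
  have hhead : ∀ j, ∑ k ∈ Finset.range (n+1), G j k =
      ((if ib n = j then (1:ℝ) else 0) - if jb n = j then 1 else 0) * P := by
    intro j
    rw [Finset.sum_range_succ,
      Finset.sum_eq_zero (fun k hk => hheadzero j k (mem_range.mp hk)), zero_add]
    simp only [hG, pterm, hprodeq n le_rfl, ← hPdef, sub_mul]
  set j1 := ib n with hj1
  set j2 := jb n with hj2
  have hhead1 : ∑ k ∈ Finset.range (n+1), G j1 k = P := by
    rw [hhead j1, if_pos rfl, if_neg (fun h => hne h.symm)]; ring
  have hhead2 : ∑ k ∈ Finset.range (n+1), G j2 k = -P := by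
    rw [hhead j2, if_pos rfl, if_neg hne]; ring
  -- tails
  set T : ι → ℝ := fun j => ∑' k, G j (k + (n+1)) with hT
  have hGshift : ∀ j, Summable (fun k => G j (k + (n+1))) :=
    fun j => (summable_nat_add_iff (n+1)).2 (hGsum j)
  have hsplit : ∀ j, ∑' k, G j k = (∑ k ∈ Finset.range (n+1), G j k) + T j :=
    fun j => (Summable.sum_add_tsum_nat_add (n+1) (hGsum j)).symm
  -- pointwise tail bound
  have hb : ∀ j m, |G j m| ≤ (if ib m = j then |∏ l ∈ Finset.range m, c (ib l)| else 0)
      + (if jb m = j then |∏ l ∈ Finset.range m, c (jb l)| else 0) := by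
    intro j m
    simp only [hG, pterm]
    split_ifs <;> simp [abs_sub, abs_nonneg]
  have habs2 : ∀ m, |G j1 m| + |G j2 m| ≤
      |∏ l ∈ Finset.range m, c (ib l)| + |∏ l ∈ Finset.range m, c (jb l)| := by
    intro m
    have e1 : (if ib m = j1 then |∏ l ∈ Finset.range m, c (ib l)| else 0)
        + (if ib m = j2 then |∏ l ∈ Finset.range m, c (ib l)| else 0)
        ≤ |∏ l ∈ Finset.range m, c (ib l)| := by
      split_ifs with u v
      · exact absurd (u.symm.trans v) hne
      · simp
      · simp
      · simp [abs_nonneg]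
    have e2 : (if jb m = j1 then |∏ l ∈ Finset.range m, c (jb l)| else 0)
        + (if jb m = j2 then |∏ l ∈ Finset.range m, c (jb l)| else 0)
        ≤ |∏ l ∈ Finset.range m, c (jb l)| := by
      split_ifs with u v
      · exact absurd (u.symm.trans v) hne
      · simp
      · simp
      · simp [abs_nonneg]
    linarith [hb j1 m, hb j2 m]
  -- geometric bounds on the product tails
  have hprodbound : ∀ (b : ℕ → ι) k, (∏ l ∈ Finset.range n, c (b l) = P) →
      |∏ l ∈ Finset.range (k + (n+1)), c (b l)| ≤ |P| * M ^ (k+1) := by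
    intro b k hbP
    have hdecomp : ∏ l ∈ Finset.range (k + (n+1)), c (b l)
        = (∏ l ∈ Finset.range n, c (b l)) * ∏ l ∈ Finset.range (k+1), c (b (n + l)) := by
      rw [show k + (n+1) = n + (k+1) by ring, Finset.prod_range_add]
    rw [hdecomp, hbP, abs_mul]
    refine mul_le_mul_of_nonneg_left ?_ (abs_nonneg _)
    rw [abs_prod]
    calc ∏ l ∈ Finset.range (k+1), |c (b (n + l))| ≤ ∏ l ∈ Finset.range (k+1), M :=
          Finset.prod_le_prod (fun _ _ => abs_nonneg _) (fun l _ => hMle _)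
      _ = M ^ (k+1) := by rw [prod_const, card_range]
  have hgs : Summable (fun k : ℕ => M ^ k) := summable_geometric_of_lt_one hM0.le hM1
  have hgs' : Summable (fun k : ℕ => M ^ (k+1)) := by
    simpa [pow_succ] using hgs.mul_right M
  have hgeo : ∑' k : ℕ, M ^ (k+1) = M / (1-M) := by
    calc ∑' k : ℕ, M ^ (k+1) = ∑' k : ℕ, M ^ k * M := by simp [pow_succ]
      _ = (∑' k : ℕ, M ^ k) * M := tsum_mul_right
      _ = (1-M)⁻¹ * M := by rw [tsum_geometric_of_lt_one hM0.le hM1]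
      _ = M / (1-M) := by rw [inv_mul_eq_div]
  -- tail sums bound
  have habsGsum : ∀ j, Summable (fun k => |G j (k + (n+1))|) := fun j => (hGshift j).abs
  have hTle : ∀ j, |T j| ≤ ∑' k, |G j (k + (n+1))| := by
    intro j
    have h1 : Summable (fun k => ‖G j (k + (n+1))‖) := by
      simpa only [Real.norm_eq_abs] using habsGsum j
    have h2 := norm_tsum_le_tsum_norm h1
    simpa only [hT, Real.norm_eq_abs] using h2
  have htails : (∑' k, |G j1 (k + (n+1))|) + ∑' k, |G j2 (k + (n+1))|
      ≤ 2 * |P| * (M / (1-M)) := by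
    rw [← Summable.tsum_add (habsGsum j1) (habsGsum j2)]
    calc ∑' k, (|G j1 (k + (n+1))| + |G j2 (k + (n+1))|)
        ≤ ∑' k, (|P| * M ^ (k+1) + |P| * M ^ (k+1)) := by
          refine Summable.tsum_le_tsum (fun k => ?_) ((habsGsum j1).add (habsGsum j2))
            (((hgs'.mul_left |P|).add (hgs'.mul_left |P|)))
          refine (habs2 (k + (n+1))).trans (add_le_add ?_ ?_)
          · exact hprodbound ib k rfl
          · exact hprodbound jb k (hprodeq n le_rfl)
      _ = 2 * |P| * (M / (1-M)) := by
          rw [Summable.tsum_add (hgs'.mul_left |P|) (hgs'.mul_left |P|), tsum_mul_left, hgeo]; ring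
  have hT12 : |T j1| + |T j2| ≤ 2 * |P| * (M / (1-M)) :=
    le_trans (add_le_add (hTle j1) (hTle j2)) htails
  -- coordinates
  have hΔ1 : (PiVec c ib - PiVec c jb) j1 = P + T j1 := by
    rw [hΔ j1, hsplit j1, hhead1]
  have hΔ2 : (PiVec c ib - PiVec c jb) j2 = -P + T j2 := by
    rw [hΔ j2, hsplit j2, hhead2]
  have hn1 : |P + T j1| ≤ ‖PiVec c ib - PiVec c jb‖ := hΔ1 ▸ coord_le_norm _ j1
  have hn2 : |-P + T j2| ≤ ‖PiVec c ib - PiVec c jb‖ := hΔ2 ▸ coord_le_norm _ j2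
  have hx1 : |P| - |T j1| ≤ |P + T j1| := by
    have := abs_add_le (P + T j1) (-T j1)
    simp only [add_neg_cancel_right, abs_neg] at this
    linarith
  have hx2 : |P| - |T j2| ≤ |-P + T j2| := by
    have := abs_add_le (-P + T j2) (-T j2)
    simp only [add_neg_cancel_right, abs_neg, abs_neg] at this
    have h' : |-P| = |P| := abs_neg P
    linarith [this, h'.symm.le]
  -- final arithmetic
  have hne' : (1:ℝ) - M ≠ 0 := by linarith
  have hfe : (1 - 2*M)/(1-M) = 1 - M/(1-M) := by
    rw [eq_sub_iff_add_eq, ← add_div, show 1-2*M+M = 1-M by ring, div_self hne']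
  have hS : |P| * (M / (1-M)) * 2 ≥ |T j1| + |T j2| → True := fun _ => trivial
  rw [hfe]
  have key : 2 * (|P| * (1 - M/(1-M))) ≤ 2 * ‖PiVec c ib - PiVec c jb‖ := by
    have := hT12
    nlinarith [hn1, hn2, hx1, hx2]
  linarith

end
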